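/- arXiv:2405.13975 — 3 statements merged into one kernel-verified Lean document; each statement's English description precedes it below -/
import Mathlib

section
/- Let a₁,…,aₙ ∈ ℂ with Re(a_j) < 0 and c₁,…,cₙ ∈ ℂ, defining G(s) = Σ_j c_j/(s − a_j). Let ã_j, c̃_j be perturbed values with Re(ã_j) < 0, |a_j − ã_j| ≤ Δ_A ≤ min_j |Re(a_j)|/2, and |c_j − c̃_j| ≤ Δ_B, defining G̃(s) = Σ_j c̃_j/(s − ã_j). Then sup_{Re(s)=0} |G(s) − G̃(s)| ≤ 4n·Δ_A·max_j |c_j|/|Re(a_j)|² + n·Δ_B·max_j 1/|Re(a_j)|. -/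
open scoped BigOperators

private lemma diag_lti_aux (C Δ r : ℝ) (hr : r ≠ 0) :
    2 * C * Δ = 4 * Δ * (C / r ^ 2) * (r * (r / 2)) := by
  field_simp; ring

/-- Perturbation bound for diagonal LTI transfer functions
`G s = ∑ c j / (s - a j)`. -/
theorem diagonal_lti_perturbation (n : ℕ) (hn : 0 < n)
    (a c atil ctil : Fin n → ℂ) (ΔA ΔB : ℝ)
    (ha : ∀ j, (a j).re < 0) (hatil : ∀ j, (atil j).re < 0)
    (hΔA : ∀ j, ‖a j - atil j‖ ≤ ΔA)
    (hΔAsmall : ∀ j, ΔA ≤ |(a j).re| / 2)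
    (hΔB : ∀ j, ‖c j - ctil j‖ ≤ ΔB)
    (hΔBc : ∀ j, ‖c j - ctil j‖ ≤ ‖c j‖) :
    ∀ s : ℂ, s.re = 0 →
      ‖(∑ j, c j / (s - a j)) - (∑ j, ctil j / (s - atil j))‖ ≤
        4 * n * ΔA *
            (Finset.univ.sup' (Finset.univ_nonempty_iff.mpr (Fin.pos_iff_nonempty.mp hn))
              fun j => ‖c j‖ / |(a j).re| ^ 2) +
          n * ΔB *
            (Finset.univ.sup' (Finset.univ_nonempty_iff.mpr (Fin.pos_iff_nonempty.mp hn))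
              fun j => 1 / |(a j).re|) := by
  intro s hs
  have hne : (Finset.univ : Finset (Fin n)).Nonempty :=
    Finset.univ_nonempty_iff.mpr (Fin.pos_iff_nonempty.mp hn)
  set M1 := Finset.univ.sup' hne fun j => ‖c j‖ / |(a j).re| ^ 2 with hM1
  set M2 := Finset.univ.sup' hne fun j => 1 / |(a j).re| with hM2
  obtain ⟨j0, _⟩ := hne
  have hΔA0 : 0 ≤ ΔA := le_trans (norm_nonneg _) (hΔA j0)
  have hΔB0 : 0 ≤ ΔB := le_trans (norm_nonneg _) (hΔB j0)
  have key : ∀ j : Fin n,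
      ‖c j / (s - a j) - ctil j / (s - atil j)‖ ≤ 4 * ΔA * M1 + ΔB * M2 := by
    intro j
    have hra : 0 < |(a j).re| := abs_pos.mpr (ne_of_lt (ha j))
    have hsa : |(a j).re| ≤ ‖s - a j‖ := by
      have := Complex.abs_re_le_norm (s - a j)
      have h2 : (s - a j).re = -(a j).re := by simp [Complex.sub_re, hs]
      rw [h2, abs_neg] at this
      exact this
    have habsre : |(a j).re - (atil j).re| ≤ ΔA := by
      have h1 := Complex.abs_re_le_norm (a j - atil j)
      have h2 : (a j - atil j).re = (a j).re - (atil j).re := by simp [Complex.sub_re]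
      rw [h2] at h1
      exact h1.trans (hΔA j)
    have hsat : |(a j).re| / 2 ≤ ‖s - atil j‖ := by
      have h1 : |(atil j).re| ≤ ‖s - atil j‖ := by
        have := Complex.abs_re_le_norm (s - atil j)
        have h2 : (s - atil j).re = -(atil j).re := by simp [Complex.sub_re, hs]
        rw [h2, abs_neg] at this
        exact this
      have h3 : |(a j).re| - |(atil j).re| ≤ |(a j).re - (atil j).re| :=
        abs_sub_abs_le_abs_sub _ _
      have h4 := hΔAsmall j
      linarith
    have hsa0 : 0 < ‖s - a j‖ := lt_of_lt_of_le hra hsa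
    have hsat0 : 0 < ‖s - atil j‖ := lt_of_lt_of_le (by linarith) hsat
    have hsane : s - a j ≠ 0 := by
      intro h; rw [h] at hsa0; simp at hsa0
    have hsatne : s - atil j ≠ 0 := by
      intro h; rw [h] at hsat0; simp at hsat0
    have hsplit : c j / (s - a j) - ctil j / (s - atil j)
        = (c j - ctil j) / (s - a j) + ctil j * (a j - atil j) / ((s - a j) * (s - atil j)) := by
      field_simp
      ring
    have hct : ‖ctil j‖ ≤ 2 * ‖c j‖ := by
      have h1 : ‖ctil j‖ ≤ ‖c j‖ + ‖c j - ctil j‖ := by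
        calc ‖ctil j‖ = ‖c j + -(c j - ctil j)‖ := by congr 1; ring
          _ ≤ ‖c j‖ + ‖-(c j - ctil j)‖ := norm_add_le _ _
          _ = ‖c j‖ + ‖c j - ctil j‖ := by rw [norm_neg]
      have h2 := hΔBc j
      linarith
    -- bound term 1
    have hterm1 : ‖(c j - ctil j) / (s - a j)‖ ≤ ΔB * (1 / |(a j).re|) := by
      rw [norm_div]
      rw [div_le_iff₀ hsa0]
      calc ‖c j - ctil j‖ ≤ ΔB := hΔB j
        _ = ΔB * (1 / |(a j).re|) * |(a j).re| := by field_simp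
        _ ≤ ΔB * (1 / |(a j).re|) * ‖s - a j‖ := by
            apply mul_le_mul_of_nonneg_left hsa
            positivity
    -- bound term 2
    have hterm2 : ‖ctil j * (a j - atil j) / ((s - a j) * (s - atil j))‖
        ≤ 4 * ΔA * (‖c j‖ / |(a j).re| ^ 2) := by
      rw [norm_div, norm_mul, norm_mul]
      rw [div_le_iff₀ (by positivity)]
      have hnum : ‖ctil j‖ * ‖a j - atil j‖
          ≤ 2 * ‖c j‖ * ΔA :=
        mul_le_mul hct (hΔA j) (norm_nonneg _) (by positivity)
      calc ‖ctil j‖ * ‖a j - atil j‖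
          ≤ 2 * ‖c j‖ * ΔA := hnum
        _ = (4 * ΔA * (‖c j‖ / |(a j).re| ^ 2)) * (|(a j).re| * (|(a j).re| / 2)) :=
            diag_lti_aux _ _ _ (ne_of_gt hra)
        _ ≤ (4 * ΔA * (‖c j‖ / |(a j).re| ^ 2)) *
              (‖s - a j‖ * ‖s - atil j‖) := by
            apply mul_le_mul_of_nonneg_left _ (by positivity)
            exact mul_le_mul hsa hsat (by positivity) (le_of_lt hsa0)
    have hsup1 : ‖c j‖ / |(a j).re| ^ 2 ≤ M1 :=
      Finset.le_sup' (fun j => ‖c j‖ / |(a j).re| ^ 2) (Finset.mem_univ j)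
    have hsup2 : 1 / |(a j).re| ≤ M2 :=
      Finset.le_sup' (fun j => 1 / |(a j).re|) (Finset.mem_univ j)
    calc ‖c j / (s - a j) - ctil j / (s - atil j)‖
        ≤ ‖(c j - ctil j) / (s - a j)‖
          + ‖ctil j * (a j - atil j) / ((s - a j) * (s - atil j))‖ := by
          rw [hsplit]; exact norm_add_le _ _
      _ ≤ ΔB * (1 / |(a j).re|) + 4 * ΔA * (‖c j‖ / |(a j).re| ^ 2) := by
          exact add_le_add hterm1 hterm2
      _ ≤ ΔB * M2 + 4 * ΔA * M1 := by
          apply add_le_add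
          · exact mul_le_mul_of_nonneg_left hsup2 hΔB0
          · exact mul_le_mul_of_nonneg_left hsup1 (by positivity)
      _ = 4 * ΔA * M1 + ΔB * M2 := by ring
  calc ‖(∑ j, c j / (s - a j)) - (∑ j, ctil j / (s - atil j))‖
      = ‖∑ j : Fin n, (c j / (s - a j) - ctil j / (s - atil j))‖ := by
        rw [Finset.sum_sub_distrib]
    _ ≤ ∑ j : Fin n, ‖c j / (s - a j) - ctil j / (s - atil j)‖ :=
        norm_sum_le _ _
    _ ≤ ∑ _j : Fin n, (4 * ΔA * M1 + ΔB * M2) := Finset.sum_le_sum fun j _ => key j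
    _ = n * (4 * ΔA * M1 + ΔB * M2) := by
        rw [Finset.sum_const, Finset.card_univ, Fintype.card_fin, nsmul_eq_mul]
    _ = 4 * n * ΔA * M1 + n * ΔB * M2 := by ring
end

section
/- Let a₁,…,aₙ ∈ ℂ with Re(a_j) < 0, c₁,…,cₙ ∈ ℂ, and G(s) = Σ_j c_j/(s − a_j). For any Δ_A ≤ min_j |Re(a_j)|/2, perturbing the pole a_{j₂} to a_{j₂} + Δ_A (where j₂ maximizes |c_j|/|Re(a_j)|²) yields G̃_A with sup_{Re(s)=0} |G(s) − G̃_A(s)| ≥ Δ_A · max_j |c_j|/|Re(a_j)|². -/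
open scoped BigOperators

/-- Sharpness of the pole-perturbation bound: moving the pole `a j₂` (with `j₂`
maximizing `|c j| / |Re a_j|²`) by `ΔA` makes the sup over the imaginary axis
at least `ΔA * max_j |c j| / |Re a_j|²`. -/
theorem diagonal_lti_pole_perturbation_sharp (n : ℕ) (a c : Fin n → ℂ)
    (ha : ∀ j, (a j).re < 0) (ΔA : ℝ) (hΔApos : 0 < ΔA)
    (hΔA : ∀ j, ΔA ≤ |(a j).re| / 2)
    (j₂ : Fin n)
    (hj₂ : ∀ j, ‖c j‖ / |(a j).re| ^ 2 ≤
      ‖c j₂‖ / |(a j₂).re| ^ 2) :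
    ∃ s : ℂ, s.re = 0 ∧
      ΔA * (‖c j₂‖ / |(a j₂).re| ^ 2) ≤
        ‖(∑ j, c j / (s - a j)) -
          (∑ j, c j / (s - (if j = j₂ then a j + (ΔA : ℂ) else a j)))‖ := by
  set R : ℝ := -(a j₂).re with hRdef
  have hR : 0 < R := by simp [hRdef]; exact ha j₂
  have habs : |(a j₂).re| = R := abs_of_neg (ha j₂)
  have hD : 0 < R - ΔA := by
    have := hΔA j₂
    rw [habs] at this
    linarith
  refine ⟨Complex.I * (a j₂).im, by simp, ?_⟩
  set s : ℂ := Complex.I * (a j₂).im with hs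
  have key : (∑ j, c j / (s - a j)) -
      (∑ j, c j / (s - (if j = j₂ then a j + (ΔA : ℂ) else a j)))
      = c j₂ / (s - a j₂) - c j₂ / (s - (a j₂ + ΔA)) := by
    rw [← Finset.sum_sub_distrib, Finset.sum_eq_single j₂]
    · simp
    · intro j _ hj; simp [hj]
    · simp
  have hx : s - a j₂ = (R : ℂ) := by
    apply Complex.ext <;> simp [hs, hRdef]
  have hy : s - (a j₂ + ΔA) = ((R - ΔA : ℝ) : ℂ) := by
    apply Complex.ext <;> simp [hs, hRdef] <;> ring
  have hdiff : c j₂ / (s - a j₂) - c j₂ / (s - (a j₂ + ΔA))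
      = c j₂ * (-ΔA) / ((R : ℂ) * ((R - ΔA : ℝ) : ℂ)) := by
    rw [hx, hy]
    have h1 : (R : ℂ) ≠ 0 := by exact_mod_cast hR.ne'
    have h2 : ((R - ΔA : ℝ) : ℂ) ≠ 0 := by exact_mod_cast hD.ne'
    push_cast at h1 h2 ⊢
    field_simp
    ring
  rw [key, hdiff]
  rw [norm_div, norm_mul, norm_mul]
  have h3 : ‖(-ΔA : ℂ)‖ = ΔA := by
    rw [← Complex.ofReal_neg, Complex.norm_real, Real.norm_eq_abs, abs_neg, abs_of_pos hΔApos]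
  have h4 : ‖(R : ℂ)‖ = R := by
    rw [Complex.norm_real, Real.norm_eq_abs, abs_of_pos hR]
  have h5 : ‖((R - ΔA : ℝ) : ℂ)‖ = R - ΔA := by
    rw [Complex.norm_real, Real.norm_eq_abs, abs_of_pos hD]
  rw [h3, h4, h5, habs]
  have hcnn : (0 : ℝ) ≤ ‖c j₂‖ := norm_nonneg _
  have hcalc : ΔA * (‖c j₂‖ / R ^ 2)
      = ‖c j₂‖ * ΔA / R ^ 2 := by ring
  rw [hcalc]
  have hpos : 0 < R * (R - ΔA) := mul_pos hR hD
  gcongr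
  nlinarith
end

section
/- For complex numbers a, ã with negative real parts and c, c̃ ∈ ℂ, suppose |a − ã| ≤ Δ_A ≤ |Re(a)|/2 and |c − c̃| ≤ Δ_B. Then for every s on the imaginary axis, |c/(s − a) − c̃/(s − ã)| ≤ Δ_B/|Re(a)| + 4|c̃|·Δ_A/|Re(a)|². -/
/-- Single-term perturbation estimate for `c/(s-a)` on the imaginary axis. -/
theorem single_term_perturbation (a atil c ctil : ℂ) (ΔA ΔB : ℝ)
    (ha : a.re < 0) (hatil : atil.re < 0)
    (hΔA : ‖a - atil‖ ≤ ΔA) (hΔAsmall : ΔA ≤ |a.re| / 2)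
    (hΔB : ‖c - ctil‖ ≤ ΔB) :
    ∀ s : ℂ, s.re = 0 →
      ‖c / (s - a) - ctil / (s - atil)‖ ≤
        ΔB / |a.re| + 4 * ‖ctil‖ * ΔA / |a.re| ^ 2 := by
  intro s hs
  have hr : (0:ℝ) < |a.re| := abs_pos.mpr (ne_of_lt ha)
  have hΔAnn : 0 ≤ ΔA := le_trans (norm_nonneg _) hΔA
  have hΔBnn : 0 ≤ ΔB := le_trans (norm_nonneg _) hΔB
  have h1 : |a.re| ≤ ‖s - a‖ := by
    have := Complex.abs_re_le_norm (s - a)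
    simpa [Complex.sub_re, hs, abs_neg] using this
  have hre : |a.re - atil.re| ≤ ΔA := by
    have := Complex.abs_re_le_norm (a - atil)
    simpa [Complex.sub_re] using this.trans hΔA
  have h2 : |a.re| / 2 ≤ ‖s - atil‖ := by
    have h3 : |a.re| - ΔA ≤ |atil.re| := by
      have := abs_sub_abs_le_abs_sub a.re atil.re
      linarith [this.trans hre]
    have h4 : |atil.re| ≤ ‖s - atil‖ := by
      have := Complex.abs_re_le_norm (s - atil)
      simpa [Complex.sub_re, hs, abs_neg] using this
    linarith
  have hsa : s - a ≠ 0 := by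
    intro h
    rw [h] at h1; simp at h1; linarith
  have hsat : s - atil ≠ 0 := by
    intro h
    rw [h] at h2; simp at h2; linarith
  have key : c / (s - a) - ctil / (s - atil)
      = (c - ctil) / (s - a) + ctil * (a - atil) / ((s - a) * (s - atil)) := by
    field_simp
    ring
  rw [key]
  calc ‖(c - ctil) / (s - a) + ctil * (a - atil) / ((s - a) * (s - atil))‖
      ≤ ‖(c - ctil) / (s - a)‖
        + ‖ctil * (a - atil) / ((s - a) * (s - atil))‖ :=
        norm_add_le _ _
    _ ≤ ΔB / |a.re| + 4 * ‖ctil‖ * ΔA / |a.re| ^ 2 := by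
        gcongr ?_ + ?_
        · rw [norm_div]
          exact div_le_div₀ hΔBnn hΔB hr h1
        · rw [norm_div, norm_mul, norm_mul]
          have hd : 0 < |a.re| * (|a.re| / 2) := by positivity
          have hnum : ‖ctil‖ * ‖a - atil‖
              ≤ ‖ctil‖ * ΔA :=
            mul_le_mul_of_nonneg_left hΔA (norm_nonneg _)
          have hden : |a.re| * (|a.re| / 2) ≤ ‖s - a‖ * ‖s - atil‖ :=
            mul_le_mul h1 h2 (by positivity) (norm_nonneg _)
          calc ‖ctil‖ * ‖a - atil‖
                / (‖s - a‖ * ‖s - atil‖)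
              ≤ ‖ctil‖ * ΔA / (|a.re| * (|a.re| / 2)) :=
                div_le_div₀ (by positivity) hnum hd hden
            _ = 2 * ‖ctil‖ * ΔA / |a.re| ^ 2 := by ring
            _ ≤ 4 * ‖ctil‖ * ΔA / |a.re| ^ 2 := by
                gcongr
                norm_num
end
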